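/- For every y ≥ 1, one has −ϑ₂'''(y) < 2 π³ e^{−πy/4}/64 + 2 · (1 + 0.0003) · 729 π³ e^{−9πy/4}/64, where ϑ₂''' denotes the third derivative of ϑ₂. -/

import Mathlib

/-- The Jacobi theta function ϑ₂, defined for real `y` by
`ϑ₂(y) = ∑_{n ∈ ℤ} e^{−π y (n + 1/2)²}`. -/
noncomputable def theta2 (y : ℝ) : ℝ :=
  ∑' n : ℤ, Real.exp (-Real.pi * y * ((n : ℝ) + 1/2) ^ 2)

open Real

lemma summable_sq_nat (m : ℕ) {c : ℝ} (hc : 0 < c) :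
    Summable (fun n : ℕ => (((n:ℝ)+1/2)^2)^m * Real.exp (-c * ((n:ℝ)+1/2)^2)) := by
  have h1 : Summable (fun n : ℕ => ((n:ℝ))^(2*m) * Real.exp (-c*(n:ℝ))) :=
    Real.summable_pow_mul_exp_neg_nat_mul (2*m) hc
  have h2 := (summable_nat_add_iff 1).2 h1
  have H := h2.mul_left (Real.exp c)
  have H' : Summable (fun n : ℕ => ((n:ℝ)+1)^(2*m) * Real.exp (-c*(n:ℝ))) := by
    refine H.congr fun n => ?_
    push_cast
    rw [show rexp c * (((n:ℝ)+1)^(2*m) * rexp (-c*((n:ℝ)+1)))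
        = ((n:ℝ)+1)^(2*m) * (rexp c * rexp (-c*((n:ℝ)+1))) from by ring, ← Real.exp_add]
    ring_nf
  refine H'.of_nonneg_of_le (fun n => by positivity) fun n => ?_
  have hn : (0:ℝ) ≤ (n:ℝ) := Nat.cast_nonneg n
  have hA : (((n:ℝ)+1/2)^2)^m ≤ ((n:ℝ)+1)^(2*m) := by
    rw [pow_mul]
    exact pow_le_pow_left₀ (by positivity) (by nlinarith) m
  have hB : Real.exp (-c * ((n:ℝ)+1/2)^2) ≤ Real.exp (-c*(n:ℝ)) := by
    apply Real.exp_le_exp.2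
    nlinarith [mul_nonneg hc.le (by positivity : (0:ℝ) ≤ (n:ℝ)^2 + 1/4)]
  exact mul_le_mul hA hB (Real.exp_nonneg _) (by positivity)

lemma summable_sq_int (m : ℕ) {c : ℝ} (hc : 0 < c) :
    Summable (fun n : ℤ => (((n:ℝ)+1/2)^2)^m * Real.exp (-c * ((n:ℝ)+1/2)^2)) := by
  apply Summable.of_nat_of_neg_add_one
  · exact (summable_sq_nat m hc).congr fun n => by push_cast; ring_nf
  · refine (summable_sq_nat m hc).congr fun n => ?_
    have : ((-((n:ℤ)+1) : ℤ) : ℝ) + 1/2 = -(((n:ℝ))+1/2) := by push_cast; ring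
    rw [this]
    ring_nf

noncomputable def th2F (k : ℕ) (y : ℝ) : ℝ :=
  ∑' n : ℤ, (-π * (((n:ℤ) : ℝ) + 1/2) ^ 2) ^ k * Real.exp (-π * y * (((n:ℤ) : ℝ) + 1/2) ^ 2)

lemma norm_term_le {a : ℝ} (ha : 0 ≤ a) (k : ℕ) {y c : ℝ} (hcy : c * a ≤ π * y * a) :
    ‖(-π * a)^k * Real.exp (-π*y*a)‖ ≤ π^k * (a^k * Real.exp (-c * a)) := by
  rw [norm_mul, norm_pow, Real.norm_eq_abs, Real.norm_eq_abs, Real.abs_exp]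
  have h1 : |(-π * a)| = π * a := by
    have : -π * a ≤ 0 := by
      have := Real.pi_pos
      nlinarith
    rw [abs_of_nonpos this]; ring
  rw [h1, mul_pow, mul_assoc]
  exact mul_le_mul_of_nonneg_left
    (mul_le_mul_of_nonneg_left (Real.exp_le_exp.2 (by linarith)) (pow_nonneg ha k))
    (by positivity)

lemma th2F_hasDerivAt (k : ℕ) {y : ℝ} (hy : y ∈ Set.Ioi (1/2 : ℝ)) :
    HasDerivAt (th2F k) (th2F (k+1) y) y := by
  have pi_pos := Real.pi_pos
  set g' : ℤ → ℝ → ℝ := fun n z =>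
    (-π * (((n:ℤ) : ℝ) + 1/2) ^ 2) ^ (k+1) * Real.exp (-π * z * (((n:ℤ) : ℝ) + 1/2) ^ 2)
    with hg'def
  have key : HasDerivAt (fun z => ∑' n : ℤ,
      (-π * (((n:ℤ) : ℝ) + 1/2) ^ 2) ^ k * Real.exp (-π * z * (((n:ℤ) : ℝ) + 1/2) ^ 2))
      (∑' n : ℤ, g' n y) y := by
    apply hasDerivAt_tsum_of_isPreconnected
      (u := fun n : ℤ =>
        π^(k+1) * (((((n:ℤ):ℝ)+1/2)^2)^(k+1) * Real.exp (-(π/2) * (((n:ℤ):ℝ)+1/2)^2)))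
      (t := Set.Ioi (1/2:ℝ)) (ht := isOpen_Ioi) (h't := isPreconnected_Ioi) (y₀ := (1:ℝ))
    · exact (summable_sq_int (k+1) (by positivity)).mul_left _
    · intro n z _
      have h1 : HasDerivAt (fun w : ℝ => -π * w * (((n:ℤ):ℝ)+1/2)^2)
          (-π * (((n:ℤ):ℝ)+1/2)^2) z := by
        simpa using ((hasDerivAt_id z).const_mul (-π)).mul_const ((((n:ℤ):ℝ)+1/2)^2)
      have h2 := h1.exp.const_mul ((-π * (((n:ℤ):ℝ)+1/2)^2) ^ k)
      convert h2 using 1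
      · rfl
      rw [hg'def]
      simp only
      rw [pow_succ]
      ring
    · intro n z hz
      have hz' : (1/2:ℝ) ≤ z := le_of_lt (Set.mem_Ioi.1 hz)
      apply norm_term_le (by positivity) (k+1)
      nlinarith [mul_nonneg (mul_nonneg (sub_nonneg.2 hz') (sq_nonneg (((n:ℤ):ℝ)+1/2))) pi_pos.le]
    · exact Set.mem_Ioi.2 (by norm_num)
    · apply Summable.of_norm_bounded ((summable_sq_int k pi_pos).mul_left (π^k))
      intro n
      exact norm_term_le (by positivity) k (by nlinarith [sq_nonneg (((n:ℤ):ℝ)+1/2)])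
    · exact hy
  exact key

lemma iteratedDeriv_theta2_eq {y : ℝ} (hy : y ∈ Set.Ioi (1/2 : ℝ)) :
    iteratedDeriv 3 theta2 y = th2F 3 y := by
  have h0 : theta2 = th2F 0 := by
    funext z
    unfold theta2 th2F
    simp [Real.pi]
  have e1 : ∀ z ∈ Set.Ioi (1/2:ℝ), deriv theta2 z = th2F 1 z := fun z hz => by
    rw [h0]; exact (th2F_hasDerivAt 0 hz).deriv
  have e2 : ∀ z ∈ Set.Ioi (1/2:ℝ), deriv (deriv theta2) z = th2F 2 z := fun z hz => by
    have hev : deriv theta2 =ᶠ[nhds z] th2F 1 :=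
      Filter.eventually_of_mem (isOpen_Ioi.mem_nhds hz) e1
    rw [hev.deriv_eq]; exact (th2F_hasDerivAt 1 hz).deriv
  have e3 : ∀ z ∈ Set.Ioi (1/2:ℝ), deriv (deriv (deriv theta2)) z = th2F 3 z := fun z hz => by
    have hev : deriv (deriv theta2) =ᶠ[nhds z] th2F 2 :=
      Filter.eventually_of_mem (isOpen_Ioi.mem_nhds hz) e2
    rw [hev.deriv_eq]; exact (th2F_hasDerivAt 2 hz).deriv
  simp only [show (3:ℕ) = 2 + 1 from rfl, show (2:ℕ) = 1 + 1 from rfl,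
    iteratedDeriv_succ, iteratedDeriv_zero]
  exact e3 y hy

set_option maxHeartbeats 1000000 in
theorem theta2_third_deriv_upper_bound (y : ℝ) (hy : 1 ≤ y) :
    -iteratedDeriv 3 theta2 y < 2 * Real.pi ^ 3 * Real.exp (-Real.pi * y / 4) / 64 +
      2 * (1 + 0.0003) * 729 * Real.pi ^ 3 * Real.exp (-9 * Real.pi * y / 4) / 64 := by
  have pi_pos := Real.pi_pos
  have pi_gt := Real.pi_gt_three
  have hπy : 0 < π * y := by nlinarith
  set h : ℕ → ℝ := fun n =>
    π^3 * ((((n:ℝ)+1/2)^2)^3 * Real.exp (-(π*y) * ((n:ℝ)+1/2)^2)) with hh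
  have hsN : Summable h := (summable_sq_nat 3 hπy).mul_left _
  -- step 1-3 : -iteratedDeriv 3 theta2 y = 2 * ∑' h
  have step : -iteratedDeriv 3 theta2 y = 2 * ∑' n : ℕ, h n := by
    rw [iteratedDeriv_theta2_eq (by simp only [Set.mem_Ioi]; linarith)]
    set fZ : ℤ → ℝ := fun n =>
      π^3 * (((((n:ℤ):ℝ)+1/2)^2)^3 * Real.exp (-(π*y) * (((n:ℤ):ℝ)+1/2)^2)) with hfZ
    have e1 : -th2F 3 y = ∑' n : ℤ, fZ n := by
      unfold th2F
      rw [← tsum_neg]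
      congr 1
      funext n
      rw [hfZ]
      ring_nf
    have hs1 : Summable (fun n : ℕ => fZ n) := by
      refine hsN.congr fun n => ?_
      rw [hh, hfZ]
      push_cast
      ring_nf
    have hs2 : Summable (fun n : ℕ => fZ (-(n+1))) := by
      refine hsN.congr fun n => ?_
      rw [hh, hfZ]
      push_cast
      ring_nf
    rw [e1, tsum_of_nat_of_neg_add_one hs1 hs2]
    have c1 : ∑' n : ℕ, fZ n = ∑' n : ℕ, h n :=
      tsum_congr fun n => by rw [hh, hfZ]; push_cast; ring_nf
    have c2 : ∑' n : ℕ, fZ (-(n+1)) = ∑' n : ℕ, h n :=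
      tsum_congr fun n => by rw [hh, hfZ]; push_cast; ring_nf
    rw [c1, c2]
    ring
  rw [step]
  -- split the sum
  have hsplit : ∑' n : ℕ, h n = h 0 + (h 1 + ∑' n : ℕ, h (n+2)) := by
    rw [Summable.tsum_eq_zero_add hsN, Summable.tsum_eq_zero_add ((summable_nat_add_iff 1).2 hsN)]
  -- pointwise geometric tail bound
  have hpt : ∀ n : ℕ, h (n+2) ≤ h 2 * (1/2)^n := by
    intro n
    rw [hh]
    simp only
    push_cast
    set t : ℝ := (n:ℝ) with ht
    have hn : (0:ℝ) ≤ t := Nat.cast_nonneg n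
    have hexp1 : Real.exp (-(π*y) * ((t+2)+1/2)^2)
        = Real.exp (-(π*y) * ((2:ℝ)+1/2)^2) * Real.exp (-(π*y) * (t^2 + 5*t)) := by
      rw [← Real.exp_add]; congr 1; ring
    have hb : t + 5/2 ≤ 5/2 * Real.exp t := by nlinarith [Real.add_one_le_exp t]
    have p6 : Real.exp t ^ (6:ℕ) = Real.exp (6*t) := by
      rw [← Real.exp_nat_mul]; norm_num
    have hB3 : (((t+2+1/2)^2)^3) ≤ ((2:ℝ)+1/2)^6 * Real.exp (6*t) := by
      rw [show (((t+2+1/2)^2)^3) = (t+5/2)^6 from by ring, ← p6]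
      calc (t+5/2)^6 ≤ ((5/2) * Real.exp t)^6 := by
            apply pow_le_pow_left₀ (by positivity) hb
        _ = ((2:ℝ)+1/2)^6 * Real.exp t ^ 6 := by ring
    have hEd : Real.exp (-(π*y) * (t^2 + 5*t)) ≤ Real.exp (-(15*t)) := by
      apply Real.exp_le_exp.2
      have h3 : (3:ℝ) ≤ π * y := by nlinarith
      nlinarith [mul_nonneg (show (0:ℝ) ≤ π*y-3 by linarith)
        (show (0:ℝ) ≤ t^2+5*t by positivity), sq_nonneg t]
    have hgeom : Real.exp (6*t) * Real.exp (-(15*t)) ≤ (1/2:ℝ)^n := by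
      have e9 : Real.exp (6*t) * Real.exp (-(15*t)) = Real.exp ((-9:ℝ)) ^ n := by
        rw [← Real.exp_add, ← Real.exp_nat_mul]
        congr 1
        rw [ht]
        ring
      rw [e9]
      apply pow_le_pow_left₀ (Real.exp_nonneg _) ?_ n
      have h2e : (2:ℝ) ≤ Real.exp 9 := by nlinarith [Real.add_one_le_exp (9:ℝ)]
      have hinv : (Real.exp 9)⁻¹ * Real.exp 9 = 1 := inv_mul_cancel₀ (ne_of_gt (Real.exp_pos 9))
      rw [Real.exp_neg]
      nlinarith [mul_nonneg (le_of_lt (inv_pos.2 (Real.exp_pos (9:ℝ))))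
        (by linarith : (0:ℝ) ≤ Real.exp 9 - 2), hinv]
    calc π^3 * (((t+2+1/2)^2)^3 * Real.exp (-(π*y) * (t+2+1/2)^2))
        = π^3 * Real.exp (-(π*y) * ((2:ℝ)+1/2)^2)
            * ((((t+2+1/2)^2)^3) * Real.exp (-(π*y) * (t^2 + 5*t))) := by
          rw [show (-(π*y) * (t+2+1/2)^2) = (-(π*y) * ((t+2)+1/2)^2) from by ring, hexp1]
          ring
      _ ≤ π^3 * Real.exp (-(π*y) * ((2:ℝ)+1/2)^2)
            * ((((2:ℝ)+1/2)^6 * Real.exp (6*t)) * Real.exp (-(15*t))) := by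
          apply mul_le_mul_of_nonneg_left _ (by positivity)
          exact mul_le_mul hB3 hEd (Real.exp_nonneg _) (by positivity)
      _ ≤ π^3 * Real.exp (-(π*y) * ((2:ℝ)+1/2)^2)
            * (((2:ℝ)+1/2)^6 * (1/2:ℝ)^n) := by
          apply mul_le_mul_of_nonneg_left _ (by positivity)
          rw [mul_assoc]
          exact mul_le_mul_of_nonneg_left hgeom (by positivity)
      _ = π^3 * ((((2:ℝ)+1/2)^2)^3 * Real.exp (-(π*y) * ((2:ℝ)+1/2)^2)) * (1/2:ℝ)^n := by
          ring
  have htail : ∑' n : ℕ, h (n+2) ≤ h 2 * 2 := by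
    have hg : Summable (fun n : ℕ => h 2 * (1/2:ℝ)^n) :=
      (summable_geometric_of_lt_one (by norm_num) (by norm_num)).mul_left _
    calc ∑' n : ℕ, h (n+2) ≤ ∑' n : ℕ, h 2 * (1/2:ℝ)^n :=
          Summable.tsum_le_tsum hpt ((summable_nat_add_iff 2).2 hsN) hg
      _ = h 2 * ∑' n : ℕ, (1/2:ℝ)^n := tsum_mul_left
      _ = h 2 * 2 := by rw [tsum_geometric_of_lt_one (by norm_num) (by norm_num)]; norm_num
  -- closed forms for h 0, h 1, h 2
  have eh0 : h 0 = π^3 * ((1/64) * Real.exp (-π*y/4)) := by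
    rw [hh]; simp only; push_cast
    rw [show -(π*y) * ((0:ℝ)+1/2)^2 = -π*y/4 from by ring]
    norm_num
  have eh1 : h 1 = π^3 * ((729/64) * Real.exp (-9*π*y/4)) := by
    rw [hh]; simp only; push_cast
    rw [show -(π*y) * ((1:ℝ)+1/2)^2 = -9*π*y/4 from by ring]
    norm_num
  have eh2 : h 2 = π^3 * ((15625/64) * (Real.exp (-9*π*y/4) * Real.exp (-(4*(π*y))))) := by
    rw [hh]; simp only; push_cast
    rw [← Real.exp_add, show -9*π*y/4 + -(4*(π*y)) = -(π*y) * ((2:ℝ)+1/2)^2 from by ring]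
    norm_num
  -- the key exponential smallness
  have hE : Real.exp (-(4*(π*y))) < 69/10000000 := by
    have hbig : (10000000:ℝ)/69 < Real.exp (4*(π*y)) := by
      calc (10000000:ℝ)/69 < 2.7182818283^(12:ℕ) := by norm_num
        _ ≤ Real.exp 1 ^ (12:ℕ) :=
            pow_le_pow_left₀ (by norm_num) (le_of_lt Real.exp_one_gt_d9) 12
        _ = Real.exp 12 := by rw [← Real.exp_nat_mul]; norm_num
        _ ≤ Real.exp (4*(π*y)) := Real.exp_le_exp.2 (by nlinarith)
    have h1 : Real.exp (-(4*(π*y))) * Real.exp (4*(π*y)) = 1 := by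
      rw [← Real.exp_add]; simp
    nlinarith [Real.exp_pos (-(4*(π*y))), Real.exp_pos (4*(π*y))]
  rw [hsplit, eh0, eh1]
  rw [eh2] at htail
  nlinarith [htail, hE, Real.exp_pos (-9*π*y/4), Real.exp_pos (-π*y/4),
    Real.exp_pos (-(4*(π*y))), pow_pos pi_pos 3,
    mul_pos (pow_pos pi_pos 3) (Real.exp_pos (-9*π*y/4)),
    mul_lt_mul_of_pos_left hE (mul_pos (pow_pos pi_pos 3) (Real.exp_pos (-9*π*y/4)))]
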